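/- For every real γ > 0 and every c ∈ (0, 1), ∫₀^∞ ∫₀^{x₂} exp(−x₂) · x₁ · x₂ · exp( −(c·x₂² + (1 − c)·x₁²)/(4γ²) ) dx₁ dx₂ = (4γ⁴/(c·(1 − c))) · (1 − (2γ/√c)·W(γ/√c)) − (4γ⁴/(1 − c)) · (1 − 2γ·W(γ)). -/

import Mathlib

open MeasureTheory Real Filter Set

/-- `W x = exp (x²) · ∫_x^∞ exp (−t²) dt`, i.e. `(√π/2)·erfcx x`. -/
noncomputable def W (x : ℝ) : ℝ := Real.exp (x ^ 2) * ∫ t in Set.Ioi x, Real.exp (-(t ^ 2))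

lemma g_integrable : Integrable (fun t : ℝ => Real.exp (-(t ^ 2))) := by
  simpa using integrable_exp_neg_mul_sq (b := 1) one_pos

lemma G_eq (u : ℝ) :
    (∫ t in Set.Ioi u, Real.exp (-(t ^ 2)))
      = (∫ t in Set.Ioi (0:ℝ), Real.exp (-(t ^ 2))) - ∫ t in (0:ℝ)..u, Real.exp (-(t ^ 2)) := by
  have h := intervalIntegral.integral_Iic_sub_Iic (μ := volume)
    (f := fun t : ℝ => Real.exp (-(t ^ 2))) (a := (0:ℝ)) (b := u)
    g_integrable.integrableOn g_integrable.integrableOn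
  have h0 : (∫ t, Real.exp (-(t ^ 2)))
      = (∫ t in Set.Iic (0:ℝ), Real.exp (-(t ^ 2))) + ∫ t in Set.Ioi (0:ℝ), Real.exp (-(t ^ 2)) :=
    (intervalIntegral.integral_Iic_add_Ioi (μ := volume) g_integrable.integrableOn g_integrable.integrableOn).symm
  have hu : (∫ t, Real.exp (-(t ^ 2)))
      = (∫ t in Set.Iic u, Real.exp (-(t ^ 2))) + ∫ t in Set.Ioi u, Real.exp (-(t ^ 2)) :=
    (intervalIntegral.integral_Iic_add_Ioi (μ := volume) g_integrable.integrableOn g_integrable.integrableOn).symm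
  linarith [h, h0, hu]

lemma G_hasDerivAt (u : ℝ) :
    HasDerivAt (fun u => ∫ t in Set.Ioi u, Real.exp (-(t ^ 2))) (-Real.exp (-(u ^ 2))) u := by
  have h1 : HasDerivAt (fun u => ∫ t in (0:ℝ)..u, Real.exp (-(t ^ 2)))
      (Real.exp (-(u ^ 2))) u :=
    intervalIntegral.integral_hasDerivAt_right g_integrable.intervalIntegrable
      g_integrable.aestronglyMeasurable.stronglyMeasurableAtFilter
      (by fun_prop)
  have h2 := (hasDerivAt_const u (∫ t in Set.Ioi (0:ℝ), Real.exp (-(t ^ 2)))).sub h1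
  exact (h2.congr_deriv (by simp)).congr_of_eventuallyEq (Eventually.of_forall fun v => G_eq v)

lemma G_tendsto : Tendsto (fun u => ∫ t in Set.Ioi u, Real.exp (-(t ^ 2))) atTop (nhds 0) := by
  have h := intervalIntegral_tendsto_integral_Ioi (0:ℝ)
    (f := fun t : ℝ => Real.exp (-(t ^ 2))) g_integrable.integrableOn tendsto_id
  have := (tendsto_const_nhds (x := ∫ t in Set.Ioi (0:ℝ), Real.exp (-(t ^ 2)))
    (f := atTop)).sub h
  simpa [← G_eq] using this

lemma inner_int (k : ℝ) (hk : 0 < k) (s : ℝ) :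
    ∫ x in (0:ℝ)..s, x * Real.exp (-(k * x ^ 2)) = (1 - Real.exp (-(k * s ^ 2))) / (2 * k) := by
  have hd : ∀ x ∈ Set.uIcc (0:ℝ) s,
      HasDerivAt (fun x => -Real.exp (-(k * x ^ 2)) / (2 * k))
        (x * Real.exp (-(k * x ^ 2))) x := by
    intro x _
    have h1 : HasDerivAt (fun x : ℝ => -(k * x ^ 2)) (-(k * (2 * x))) x := by
      exact (((hasDerivAt_pow 2 x).const_mul k).neg).congr_deriv (by norm_num)
    have h2 := ((h1.exp).neg).div_const (2 * k)
    refine h2.congr_deriv ?_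
    field_simp
  rw [intervalIntegral.integral_eq_sub_of_hasDerivAt hd
    ((Continuous.intervalIntegrable (by fun_prop) _ _))]
  field_simp
  simp
  ring

lemma f_integrable (a : ℝ) (ha : 0 < a) :
    IntegrableOn (fun x => x * Real.exp (-x - x ^ 2 / (4 * a ^ 2))) (Set.Ioi (0:ℝ)) := by
  have hb : (0:ℝ) < 1/(4*a^2) := by positivity
  have hg : Integrable (fun x : ℝ => x * Real.exp (-(1/(4*a^2)) * x ^ 2)) :=
    integrable_mul_exp_neg_mul_sq hb
  refine hg.integrableOn.mono' ((by fun_prop : Continuous fun x : ℝ =>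
    x * Real.exp (-x - x ^ 2 / (4 * a ^ 2))).aestronglyMeasurable.restrict) ?_
  filter_upwards [ae_restrict_mem measurableSet_Ioi] with x hx
  have hx0 : (0:ℝ) < x := hx
  have hsplit : Real.exp (-x - x ^ 2 / (4 * a ^ 2))
      = Real.exp (-x) * Real.exp (-(1/(4*a^2)) * x ^ 2) := by
    rw [← Real.exp_add]; congr 1; field_simp; ring
  rw [Real.norm_eq_abs, abs_of_nonneg (by positivity), hsplit]
  have h1 : Real.exp (-x) ≤ 1 := Real.exp_le_one_iff.mpr (by linarith)
  calc x * (Real.exp (-x) * Real.exp (-(1/(4*a^2)) * x ^ 2))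
      ≤ x * (1 * Real.exp (-(1/(4*a^2)) * x ^ 2)) := by
        apply mul_le_mul_of_nonneg_left _ hx0.le
        exact mul_le_mul_of_nonneg_right h1 (Real.exp_pos _).le
    _ = x * Real.exp (-(1/(4*a^2)) * x ^ 2) := by ring

lemma I_eq (a : ℝ) (ha : 0 < a) :
    ∫ x in Set.Ioi (0:ℝ), x * Real.exp (-x - x ^ 2 / (4 * a ^ 2))
      = 2 * a ^ 2 * (1 - 2 * a * W a) := by
  have ha' : (2:ℝ) * a ≠ 0 := by positivity
  set G : ℝ → ℝ := fun u => ∫ t in Set.Ioi u, Real.exp (-(t ^ 2)) with hG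
  set F : ℝ → ℝ := fun x => -(2*a^2) * Real.exp (-x - x^2/(4*a^2))
      + 4*a^3 * Real.exp (a^2) * G (x/(2*a) + a) with hF
  have key : ∀ x : ℝ, HasDerivAt F (x * Real.exp (-x - x ^ 2 / (4 * a ^ 2))) x := by
    intro x
    have h1 : HasDerivAt (fun x : ℝ => -x - x^2/(4*a^2)) (-1 - 2*x/(4*a^2)) x := by
      have := (hasDerivAt_id x).neg.sub ((hasDerivAt_pow 2 x).div_const (4*a^2))
      exact this.congr_deriv (by norm_num)
    have h2 : HasDerivAt (fun x : ℝ => -(2*a^2) * Real.exp (-x - x^2/(4*a^2)))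
        (-(2*a^2) * (Real.exp (-x - x^2/(4*a^2)) * (-1 - 2*x/(4*a^2)))) x :=
      (h1.exp).const_mul _
    have h3 : HasDerivAt (fun x : ℝ => x/(2*a) + a) (1/(2*a)) x := by
      simpa using ((hasDerivAt_id x).div_const (2*a)).add_const a
    have h4 : HasDerivAt (fun x : ℝ => G (x/(2*a) + a))
        (-Real.exp (-((x/(2*a) + a) ^ 2)) * (1/(2*a))) x :=
      by have := (G_hasDerivAt (x/(2*a) + a)).comp x h3; exact this
    have h5 := h2.add ((h4.const_mul (4*a^3 * Real.exp (a^2))))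
    refine h5.congr_deriv ?_
    have hexp : Real.exp (a^2) * Real.exp (-((x/(2*a) + a) ^ 2))
        = Real.exp (-x - x^2/(4*a^2)) := by
      rw [← Real.exp_add]; congr 1; field_simp; ring
    rw [← hexp]
    field_simp
    ring
  have hcont : ContinuousWithinAt F (Set.Ici (0:ℝ)) 0 :=
    (key 0).continuousAt.continuousWithinAt
  have htend : Tendsto F atTop (nhds 0) := by
    have e1 : Tendsto (fun x : ℝ => Real.exp (-x - x^2/(4*a^2))) atTop (nhds 0) := by
      apply Real.tendsto_exp_atBot.comp
      apply tendsto_atBot_mono (f := fun x : ℝ => -x)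
      · intro x
        have : 0 ≤ x^2/(4*a^2) := by positivity
        linarith
      · exact tendsto_neg_atBot_iff.mpr tendsto_id
    have e2 : Tendsto (fun x : ℝ => G (x/(2*a) + a)) atTop (nhds 0) := by
      apply G_tendsto.comp
      apply tendsto_atTop_add_const_right
      exact tendsto_id.atTop_div_const (by positivity)
    have := (e1.const_mul (-(2*a^2))).add (e2.const_mul (4*a^3 * Real.exp (a^2)))
    simpa [hF] using this
  rw [integral_Ioi_of_hasDerivAt_of_tendsto hcont (fun x _ => key x) (f_integrable a ha) htend]
  have hF0 : F 0 = -(2*a^2) + 4*a^3 * Real.exp (a^2) * G a := by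
    simp [hF]
  rw [hF0]
  have hW : W a = Real.exp (a^2) * G a := rfl
  rw [hW]
  ring

theorem selfblocking_marginal_term_x₂ (γ c : ℝ) (hγ : 0 < γ) (hc : c ∈ Set.Ioo (0 : ℝ) 1) :
    ∫ x₂ in Set.Ioi (0 : ℝ),
        ∫ x₁ in (0 : ℝ)..x₂,
          Real.exp (-x₂) * x₁ * x₂ *
            Real.exp (-((c * x₂ ^ 2 + (1 - c) * x₁ ^ 2) / (4 * γ ^ 2)))
      = (4 * γ ^ 4 / (c * (1 - c))) * (1 - (2 * γ / Real.sqrt c) * W (γ / Real.sqrt c))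
        - (4 * γ ^ 4 / (1 - c)) * (1 - 2 * γ * W γ) := by
  obtain ⟨hc0, hc1⟩ := hc
  have hc1' : (0:ℝ) < 1 - c := by linarith
  have hsc : (0:ℝ) < Real.sqrt c := Real.sqrt_pos.mpr hc0
  set a₁ : ℝ := γ / Real.sqrt c with ha₁
  have ha₁pos : 0 < a₁ := by positivity
  have ha₁sq : a₁ ^ 2 = γ ^ 2 / c := by
    rw [ha₁, div_pow, Real.sq_sqrt hc0.le]
  set k : ℝ := (1 - c) / (4 * γ ^ 2) with hk
  have hkpos : 0 < k := by positivity
  have step1 : ∀ x ∈ Set.Ioi (0:ℝ),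
      (∫ x₁ in (0 : ℝ)..x,
          Real.exp (-x) * x₁ * x *
            Real.exp (-((c * x ^ 2 + (1 - c) * x₁ ^ 2) / (4 * γ ^ 2))))
        = (2 * γ ^ 2 / (1 - c)) *
            (x * Real.exp (-x - x ^ 2 / (4 * a₁ ^ 2)) - x * Real.exp (-x - x ^ 2 / (4 * γ ^ 2))) := by
    intro x _
    have hre : ∀ x₁ : ℝ,
        Real.exp (-x) * x₁ * x * Real.exp (-((c * x ^ 2 + (1 - c) * x₁ ^ 2) / (4 * γ ^ 2)))
          = (Real.exp (-x) * x * Real.exp (-(c * x ^ 2 / (4 * γ ^ 2)))) *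
              (x₁ * Real.exp (-(k * x₁ ^ 2))) := by
      intro x₁
      have hsplit : -((c * x ^ 2 + (1 - c) * x₁ ^ 2) / (4 * γ ^ 2))
          = (-(c * x ^ 2 / (4 * γ ^ 2))) + (-(k * x₁ ^ 2)) := by
        rw [hk]; field_simp; ring
      rw [hsplit, Real.exp_add]; ring
    calc (∫ x₁ in (0 : ℝ)..x,
          Real.exp (-x) * x₁ * x *
            Real.exp (-((c * x ^ 2 + (1 - c) * x₁ ^ 2) / (4 * γ ^ 2))))
        = ∫ x₁ in (0 : ℝ)..x,
            (Real.exp (-x) * x * Real.exp (-(c * x ^ 2 / (4 * γ ^ 2)))) *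
              (x₁ * Real.exp (-(k * x₁ ^ 2))) := by
          apply intervalIntegral.integral_congr
          intro x₁ _
          exact hre x₁
      _ = (Real.exp (-x) * x * Real.exp (-(c * x ^ 2 / (4 * γ ^ 2)))) *
            ∫ x₁ in (0 : ℝ)..x, x₁ * Real.exp (-(k * x₁ ^ 2)) :=
          intervalIntegral.integral_const_mul _ _
      _ = (Real.exp (-x) * x * Real.exp (-(c * x ^ 2 / (4 * γ ^ 2)))) *
            ((1 - Real.exp (-(k * x ^ 2))) / (2 * k)) := by rw [inner_int k hkpos x]
      _ = (2 * γ ^ 2 / (1 - c)) *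
            (x * Real.exp (-x - x ^ 2 / (4 * a₁ ^ 2)) - x * Real.exp (-x - x ^ 2 / (4 * γ ^ 2))) := by
          have e1 : Real.exp (-x) * Real.exp (-(c * x ^ 2 / (4 * γ ^ 2)))
              = Real.exp (-x - x ^ 2 / (4 * a₁ ^ 2)) := by
            rw [← Real.exp_add]
            congr 1
            rw [ha₁sq]
            field_simp
            ring
          have e2 : Real.exp (-x) * Real.exp (-(c * x ^ 2 / (4 * γ ^ 2))) * Real.exp (-(k * x ^ 2))
              = Real.exp (-x - x ^ 2 / (4 * γ ^ 2)) := by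
            rw [← Real.exp_add, ← Real.exp_add]
            congr 1
            rw [hk]
            field_simp
            ring
          have hinv : (2 * k)⁻¹ = 2 * γ ^ 2 / (1 - c) := by
            rw [hk]; field_simp; ring
          rw [← e1, ← e2, ← hinv]
          ring
  have step2 : (∫ x₂ in Set.Ioi (0 : ℝ),
        ∫ x₁ in (0 : ℝ)..x₂,
          Real.exp (-x₂) * x₁ * x₂ *
            Real.exp (-((c * x₂ ^ 2 + (1 - c) * x₁ ^ 2) / (4 * γ ^ 2))))
      = ∫ x in Set.Ioi (0:ℝ), (2 * γ ^ 2 / (1 - c)) *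
          (x * Real.exp (-x - x ^ 2 / (4 * a₁ ^ 2)) - x * Real.exp (-x - x ^ 2 / (4 * γ ^ 2))) :=
    setIntegral_congr_fun measurableSet_Ioi step1
  rw [step2, integral_const_mul,
    integral_sub (f_integrable a₁ ha₁pos) (f_integrable γ hγ),
    I_eq a₁ ha₁pos, I_eq γ hγ]
  have h2a : 2 * γ / Real.sqrt c = 2 * a₁ := by rw [ha₁]; ring
  rw [h2a, ha₁sq]
  field_simp
  ring
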